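/- arXiv:1507.06691 — 2 statements merged into one kernel-verified Lean document; each statement's English description precedes it below -/
import Mathlib

section
/- Let U be a Banach space, V a Hilbert space, and b : U × V → ℝ a bounded bilinear form satisfying: (i) if b(u,v)=0 for all v ∈ V then u=0, and (ii) there is γ>0 with γ‖v‖_V ≤ sup_{u∈U, u≠0} b(u,v)/‖u‖_U for all v ∈ V. Then the map u ↦ ‖u‖_E := sup_{v∈V, v≠0} b(u,v)/‖v‖_V defines a norm on U equivalent to ‖·‖_U, and in particular γ‖u‖_U ≤ ‖u‖_E for all u ∈ U. -/
open scoped RealInnerProductSpace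

section DPGAux

variable {U V : Type*} [NormedAddCommGroup U] [NormedSpace ℝ U] [CompleteSpace U]
  [NormedAddCommGroup V] [InnerProductSpace ℝ V] [CompleteSpace V]

/-- The operator `A : U → V` with `⟪A u, v⟫ = b u v`, via Riesz representation. -/
noncomputable def dpgA (b : U →L[ℝ] V →L[ℝ] ℝ) : U →L[ℝ] V where
  toFun u := (InnerProductSpace.toDual ℝ V).symm (b u)
  map_add' u u' := by simp
  map_smul' c u := by
    apply (InnerProductSpace.toDual ℝ V).injective
    ext v
    simp [InnerProductSpace.toDual_symm_apply]
  cont := (InnerProductSpace.toDual ℝ V).symm.continuous.comp b.continuous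

@[simp] lemma dpgA_apply (b : U →L[ℝ] V →L[ℝ] ℝ) (u : U) :
    dpgA b u = (InnerProductSpace.toDual ℝ V).symm (b u) := rfl

lemma dpgA_inner (b : U →L[ℝ] V →L[ℝ] ℝ) (u : U) (v : V) :
    ⟪dpgA b u, v⟫ = b u v := by
  simp [InnerProductSpace.toDual_symm_apply]

lemma dpgA_norm (b : U →L[ℝ] V →L[ℝ] ℝ) (u : U) : ‖dpgA b u‖ = ‖b u‖ := by
  simp [(InnerProductSpace.toDual ℝ V).symm.norm_map]

lemma dpg_dense (b : U →L[ℝ] V →L[ℝ] ℝ) (γ : ℝ) (hγ : 0 < γ)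
    (hinfsup : ∀ v : V, γ * ‖v‖ ≤ sSup {r : ℝ | ∃ u : U, u ≠ 0 ∧ r = b u v / ‖u‖})
    (v : V) (hv : ‖v‖ ≤ γ) :
    v ∈ closure (dpgA b '' Metric.closedBall 0 1) := by
  by_contra h
  have hconv : Convex ℝ (closure (dpgA b '' Metric.closedBall (0 : U) 1)) :=
    ((convex_closedBall (0 : U) 1).linear_image (dpgA b).toLinearMap).closure
  obtain ⟨f, c, hfs, hfx⟩ := geometric_hahn_banach_closed_point hconv isClosed_closure h
  set w : V := (InnerProductSpace.toDual ℝ V).symm f with hw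
  have hfw : ∀ x : V, f x = ⟪w, x⟫ := by
    intro x
    rw [hw, InnerProductSpace.toDual_symm_apply]
  have hmem : ∀ u : U, ‖u‖ ≤ 1 → f (dpgA b u) < c := by
    intro u hu
    exact hfs _ (subset_closure ⟨u, by simpa [Metric.mem_closedBall, dist_eq_norm] using hu, rfl⟩)
  have h0 : (0 : ℝ) < c := by
    have := hmem 0 (by simp)
    simpa using this
  have hsup : sSup {r : ℝ | ∃ u : U, u ≠ 0 ∧ r = b u w / ‖u‖} ≤ c := by
    apply Real.sSup_le _ h0.le
    rintro r ⟨u, hu, rfl⟩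
    have hnu : (0 : ℝ) < ‖u‖ := norm_pos_iff.mpr hu
    have h1 : ‖(‖u‖⁻¹ • u : U)‖ ≤ 1 := by
      rw [norm_smul, norm_inv, norm_norm, inv_mul_cancel₀ hnu.ne']
    have h2 := hmem _ h1
    have h3 : f (dpgA b (‖u‖⁻¹ • u)) = b u w / ‖u‖ := by
      rw [map_smul, map_smul, smul_eq_mul, hfw, real_inner_comm, dpgA_inner, div_eq_inv_mul]
    rw [h3] at h2
    exact h2.le
  have hgam : γ * ‖w‖ ≤ c := (hinfsup w).trans hsup
  have hc : c < ⟪w, v⟫ := by rw [← hfw]; exact hfx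
  have hiv : ⟪w, v⟫ ≤ ‖w‖ * ‖v‖ := real_inner_le_norm w v
  have hvv : ‖w‖ * ‖v‖ ≤ ‖w‖ * γ := mul_le_mul_of_nonneg_left hv (norm_nonneg w)
  have hcomm : γ * ‖w‖ = ‖w‖ * γ := mul_comm _ _
  linarith

lemma dpg_approx (b : U →L[ℝ] V →L[ℝ] ℝ) (γ : ℝ) (hγ : 0 < γ)
    (hinfsup : ∀ v : V, γ * ‖v‖ ≤ sSup {r : ℝ | ∃ u : U, u ≠ 0 ∧ r = b u v / ‖u‖})
    (w : V) (δ : ℝ) (hδ : 0 < δ) :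
    ∃ u : U, ‖u‖ ≤ ‖w‖ / γ ∧ ‖w - dpgA b u‖ ≤ δ := by
  rcases eq_or_ne w 0 with rfl | hw
  · exact ⟨0, by simp [hγ.le], by simpa using hδ.le⟩
  · have hnw : (0 : ℝ) < ‖w‖ := norm_pos_iff.mpr hw
    set w' : V := (γ / ‖w‖) • w with hw'
    have hnw' : ‖w'‖ ≤ γ := by
      rw [hw', norm_smul, Real.norm_eq_abs, abs_of_pos (by positivity), div_mul_cancel₀ _ hnw.ne']
    have hmem := dpg_dense b γ hγ hinfsup w' hnw'
    have hδ' : (0 : ℝ) < δ * γ / ‖w‖ := by positivity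
    obtain ⟨y, hy, hdist⟩ := Metric.mem_closure_iff.mp hmem _ hδ'
    obtain ⟨u', hu', rfl⟩ := hy
    refine ⟨(‖w‖ / γ) • u', ?_, ?_⟩
    · rw [norm_smul, Real.norm_eq_abs, abs_of_pos (by positivity)]
      calc ‖w‖ / γ * ‖u'‖ ≤ ‖w‖ / γ * 1 := by
            apply mul_le_mul_of_nonneg_left _ (by positivity)
            simpa [Metric.mem_closedBall, dist_eq_norm] using hu'
        _ = ‖w‖ / γ := mul_one _
    · have hkey : w - dpgA b ((‖w‖ / γ) • u') = (‖w‖ / γ) • (w' - dpgA b u') := by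
        rw [map_smul, smul_sub, hw', smul_smul]
        congr 1
        rw [div_mul_div_comm, mul_comm, ← div_mul_div_comm, div_self hnw.ne',
          div_self hγ.ne', one_mul, one_smul]
      rw [hkey, norm_smul, Real.norm_eq_abs, abs_of_pos (by positivity)]
      have hd : ‖w' - dpgA b u'‖ ≤ δ * γ / ‖w‖ := by
        rw [← dist_eq_norm]
        exact hdist.le
      calc ‖w‖ / γ * ‖w' - dpgA b u'‖ ≤ ‖w‖ / γ * (δ * γ / ‖w‖) :=
            mul_le_mul_of_nonneg_left hd (by positivity)
        _ = δ := by field_simp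

lemma dpg_preimage (b : U →L[ℝ] V →L[ℝ] ℝ) (γ : ℝ) (hγ : 0 < γ)
    (hinfsup : ∀ v : V, γ * ‖v‖ ≤ sSup {r : ℝ | ∃ u : U, u ≠ 0 ∧ r = b u v / ‖u‖})
    (v : V) (ε : ℝ) (hε : 0 < ε) :
    ∃ u : U, dpgA b u = v ∧ ‖u‖ ≤ (‖v‖ + 2 * ε) / γ := by
  have pick : ∀ (w : V) (n : ℕ), ∃ u : U, ‖u‖ ≤ ‖w‖ / γ ∧
      ‖w - dpgA b u‖ ≤ ε * (1 / 2) ^ n := by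
    intro w n
    exact dpg_approx b γ hγ hinfsup w _ (by positivity)
  choose F hF1 hF2 using pick
  let w : ℕ → V := fun n => Nat.rec v (fun n wn => wn - dpgA b (F wn n)) n
  have hw0 : w 0 = v := rfl
  have hwS : ∀ n, w (n + 1) = w n - dpgA b (F (w n) n) := fun n => rfl
  set u : ℕ → U := fun n => F (w n) n with hu
  have hwb : ∀ n, ‖w (n + 1)‖ ≤ ε * (1 / 2) ^ n := by
    intro n; rw [hwS]; exact hF2 _ _
  have hub : ∀ n, ‖u n‖ ≤ ‖w n‖ / γ := fun n => hF1 _ _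
  have hub' : ∀ n, ‖u (n + 1)‖ ≤ ε / γ * (1 / 2) ^ n := by
    intro n
    have h1 : ‖u (n + 1)‖ ≤ ‖w (n + 1)‖ / γ := hub (n + 1)
    have h2 : ‖w (n + 1)‖ / γ ≤ ε * (1 / 2) ^ n / γ := by
      gcongr
      exact hwb n
    calc ‖u (n + 1)‖ ≤ ε * (1 / 2) ^ n / γ := h1.trans h2
      _ = ε / γ * (1 / 2) ^ n := by ring
  have hgeo : Summable (fun n : ℕ => ε / γ * (1 / 2 : ℝ) ^ n) :=
    (summable_geometric_of_lt_one (by norm_num) (by norm_num)).mul_left _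
  have hsum1 : Summable (fun n => ‖u (n + 1)‖) :=
    Summable.of_nonneg_of_le (fun n => norm_nonneg _) hub' hgeo
  have hsum : Summable (fun n => ‖u n‖) := (summable_nat_add_iff 1).mp hsum1
  have husum : Summable u := hsum.of_norm
  set S : U := ∑' n, u n with hS
  have hAS : dpgA b S = v := by
    have h1 : HasSum (fun n => dpgA b (u n)) (dpgA b S) :=
      (dpgA b).hasSum husum.hasSum
    have hAn : Summable fun n => ‖dpgA b (u n)‖ :=
      Summable.of_nonneg_of_le (fun n => norm_nonneg _)
        (fun n => (dpgA b).le_opNorm (u n)) (hsum.mul_left _)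
    have h2 : HasSum (fun n => dpgA b (u n)) v := by
      rw [hasSum_iff_tendsto_nat_of_summable_norm hAn]
      have heq : ∀ n, ∑ i ∈ Finset.range n, dpgA b (u i) = v - w n := by
        intro n
        have hterm : ∀ i, dpgA b (u i) = w i - w (i + 1) := by
          intro i; rw [hwS]; abel
        simp only [hterm]
        rw [Finset.sum_range_sub' (fun i => w i) n, hw0]
      simp only [heq]
      have hwt : Filter.Tendsto w Filter.atTop (nhds 0) := by
        rw [← Filter.tendsto_add_atTop_iff_nat 1]
        apply squeeze_zero_norm hwb
        have := (tendsto_pow_atTop_nhds_zero_of_lt_one (r := (1/2 : ℝ))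
          (by norm_num) (by norm_num)).const_mul ε
        simpa using this
      simpa using (tendsto_const_nhds.sub hwt)
    exact h1.unique h2
  refine ⟨S, hAS, ?_⟩
  have hnorm : ‖S‖ ≤ ∑' n, ‖u n‖ := norm_tsum_le_tsum_norm hsum
  have htail : ∑' n, ‖u (n + 1)‖ ≤ 2 * (ε / γ) := by
    calc ∑' n, ‖u (n + 1)‖ ≤ ∑' n, ε / γ * (1 / 2 : ℝ) ^ n := Summable.tsum_le_tsum hub' hsum1 hgeo
      _ = ε / γ * ∑' n, (1 / 2 : ℝ) ^ n := by rw [tsum_mul_left]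
      _ = ε / γ * 2 := by rw [tsum_geometric_two]
      _ = 2 * (ε / γ) := by ring
  have hsplit : ∑' n, ‖u n‖ = ‖u 0‖ + ∑' n, ‖u (n + 1)‖ := Summable.tsum_eq_zero_add hsum
  have h0 : ‖u 0‖ ≤ ‖v‖ / γ := by
    have := hub 0
    rwa [hw0] at this
  calc ‖S‖ ≤ ∑' n, ‖u n‖ := hnorm
    _ = ‖u 0‖ + ∑' n, ‖u (n + 1)‖ := hsplit
    _ ≤ ‖v‖ / γ + 2 * (ε / γ) := add_le_add h0 htail
    _ = (‖v‖ + 2 * ε) / γ := by field_simp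

lemma dpg_lower (b : U →L[ℝ] V →L[ℝ] ℝ)
    (hinj : ∀ u : U, (∀ v : V, b u v = 0) → u = 0)
    (γ : ℝ) (hγ : 0 < γ)
    (hinfsup : ∀ v : V, γ * ‖v‖ ≤ sSup {r : ℝ | ∃ u : U, u ≠ 0 ∧ r = b u v / ‖u‖})
    (u : U) : γ * ‖u‖ ≤ ‖dpgA b u‖ := by
  have hAinj : Function.Injective (dpgA b) := by
    intro x y hxy
    have h0 : x - y = 0 := by
      apply hinj
      intro v
      have hz : dpgA b (x - y) = 0 := by rw [map_sub, hxy, sub_self]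
      rw [← dpgA_inner, hz, inner_zero_left]
    exact sub_eq_zero.mp h0
  have key : ∀ ε > (0:ℝ), γ * ‖u‖ ≤ ‖dpgA b u‖ + 2 * ε := by
    intro ε hε
    obtain ⟨u', hAu', hnu'⟩ := dpg_preimage b γ hγ hinfsup (dpgA b u) ε hε
    have heq : u' = u := hAinj hAu'
    subst heq
    have := (le_div_iff₀ hγ).mp hnu'
    have hc : ‖u'‖ * γ = γ * ‖u'‖ := mul_comm _ _
    linarith
  by_contra h
  push_neg at h
  have hε : (0:ℝ) < (γ * ‖u‖ - ‖dpgA b u‖) / 4 := by linarith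
  have := key _ hε
  linarith

lemma dpg_E_eq (b : U →L[ℝ] V →L[ℝ] ℝ) (u : U) :
    sSup {r : ℝ | ∃ v : V, v ≠ 0 ∧ r = b u v / ‖v‖} = ‖b u‖ := by
  by_cases hV : ∃ v : V, v ≠ 0
  · obtain ⟨v₀, hv₀⟩ := hV
    have hub : ∀ r ∈ {r : ℝ | ∃ v : V, v ≠ 0 ∧ r = b u v / ‖v‖}, r ≤ ‖b u‖ := by
      rintro r ⟨v, hv, rfl⟩
      have hnv : (0:ℝ) < ‖v‖ := norm_pos_iff.mpr hv
      rw [div_le_iff₀ hnv]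
      exact (le_abs_self _).trans ((b u).le_opNorm v)
    have hbdd : BddAbove {r : ℝ | ∃ v : V, v ≠ 0 ∧ r = b u v / ‖v‖} := ⟨‖b u‖, hub⟩
    have hle : sSup {r : ℝ | ∃ v : V, v ≠ 0 ∧ r = b u v / ‖v‖} ≤ ‖b u‖ :=
      csSup_le ⟨_, ⟨v₀, hv₀, rfl⟩⟩ hub
    have hmem : ∀ v : V, v ≠ 0 →
        b u v / ‖v‖ ≤ sSup {r : ℝ | ∃ v : V, v ≠ 0 ∧ r = b u v / ‖v‖} := by
      intro v hv
      exact le_csSup hbdd ⟨v, hv, rfl⟩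
    have hnn : 0 ≤ sSup {r : ℝ | ∃ v : V, v ≠ 0 ∧ r = b u v / ‖v‖} := by
      have h1 := hmem v₀ hv₀
      have h2 := hmem (-v₀) (neg_ne_zero.mpr hv₀)
      simp only [map_neg, norm_neg] at h2
      rcases le_total 0 (b u v₀) with h | h
      · exact le_trans (div_nonneg h (norm_nonneg _)) h1
      · have h3 : 0 ≤ -(b u v₀) / ‖v₀‖ := div_nonneg (neg_nonneg.mpr h) (norm_nonneg v₀)
        exact le_trans h3 h2
    have hge : ‖b u‖ ≤ sSup {r : ℝ | ∃ v : V, v ≠ 0 ∧ r = b u v / ‖v‖} := by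
      apply ContinuousLinearMap.opNorm_le_bound _ hnn
      intro v
      rcases eq_or_ne v 0 with rfl | hv
      · simp
      · have hnv : (0:ℝ) < ‖v‖ := norm_pos_iff.mpr hv
        have ha := (div_le_iff₀ hnv).mp (hmem v hv)
        have hb' := hmem (-v) (neg_ne_zero.mpr hv)
        simp only [map_neg, norm_neg] at hb'
        have hb2 := (div_le_iff₀ hnv).mp hb'
        rw [Real.norm_eq_abs, abs_le]
        constructor <;> linarith
    linarith
  · push_neg at hV
    have hset : {r : ℝ | ∃ v : V, v ≠ 0 ∧ r = b u v / ‖v‖} = ∅ := by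
      ext r; simp only [Set.mem_setOf_eq, Set.mem_empty_iff_false, iff_false, not_exists]
      intro v hvr
      exact absurd (hV v) hvr.1  -- fix maybe
    have hb0 : b u = 0 := by
      ext v; rw [hV v]; simp
    rw [hset, Real.sSup_empty, hb0]
    simp

end DPGAux

/-- the energy norm `u ↦ sup_{v ≠ 0} b(u,v)/‖v‖` is a norm on `U`
equivalent to `‖·‖_U`, with lower bound constant `γ` from the inf-sup condition. -/
theorem dpg_energy_norm_equivalence
    (U V : Type*) [NormedAddCommGroup U] [NormedSpace ℝ U] [CompleteSpace U]
    [NormedAddCommGroup V] [InnerProductSpace ℝ V] [CompleteSpace V]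
    (b : U →L[ℝ] V →L[ℝ] ℝ)
    (hinj : ∀ u : U, (∀ v : V, b u v = 0) → u = 0)
    (γ : ℝ) (hγ : 0 < γ)
    (hinfsup : ∀ v : V, γ * ‖v‖ ≤ sSup {r : ℝ | ∃ u : U, u ≠ 0 ∧ r = b u v / ‖u‖})
    (E : U → ℝ)
    (hE : ∀ u : U, E u = sSup {r : ℝ | ∃ v : V, v ≠ 0 ∧ r = b u v / ‖v‖}) :
    -- E is a norm on U:
    (∀ u u' : U, E (u + u') ≤ E u + E u') ∧
    (∀ (a : ℝ) (u : U), E (a • u) = |a| * E u) ∧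
    (∀ u : U, 0 ≤ E u) ∧
    (∀ u : U, E u = 0 → u = 0) ∧
    -- E is equivalent to the norm of U, with lower constant γ:
    (∀ u : U, γ * ‖u‖ ≤ E u) ∧ (∃ C : ℝ, 0 < C ∧ ∀ u : U, E u ≤ C * ‖u‖) := by
  have hEop : ∀ u : U, E u = ‖b u‖ := fun u => (hE u).trans (dpg_E_eq b u)
  refine ⟨?_, ?_, ?_, ?_, ?_, ?_⟩
  · intro u u'
    simp only [hEop, map_add]
    exact norm_add_le _ _
  · intro a u
    simp only [hEop, map_smul]
    rw [@norm_smul ℝ (V →L[ℝ] ℝ) _ _ _ _ a (b u), Real.norm_eq_abs]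
  · intro u; rw [hEop]; exact norm_nonneg _
  · intro u hu
    rw [hEop] at hu
    apply hinj
    intro v
    have hb0 : b u = 0 := norm_eq_zero.mp hu
    rw [hb0]
    simp
  · intro u
    rw [hEop, ← dpgA_norm]
    exact dpg_lower b hinj γ hγ hinfsup u
  · refine ⟨‖b‖ + 1, by positivity, fun u => ?_⟩
    rw [hEop]
    calc ‖b u‖ ≤ ‖b‖ * ‖u‖ := b.le_opNorm u
      _ ≤ (‖b‖ + 1) * ‖u‖ := by
          apply mul_le_mul_of_nonneg_right (by linarith) (norm_nonneg u)
end

section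
/- Let 𝒯 be a quasi-uniform partition of I=(0,1) into N intervals and τ a piecewise H¹ function on 𝒯. Then ‖τ‖_{L²(I)} ≤ C (‖D_𝒯 τ‖_{L²(I)} + N^{1/2} |[τ]|), where D_𝒯 denotes the piecewise derivative and [τ] ∈ ℝ^{N+1} the vector of jumps of τ at the nodes (including boundary traces), with C independent of 𝒯. -/
open MeasureTheory Set


/-- Discrete Cauchy–Schwarz: `∑ |v| ≤ √n √(∑ v²)`. -/
lemma pp_cs_fin (n : ℕ) (v : ℕ → ℝ) :
    ∑ j ∈ Finset.range n, |v j| ≤ Real.sqrt n * Real.sqrt (∑ j ∈ Finset.range n, (v j) ^ 2) := by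
  have h := Finset.sum_mul_sq_le_sq_mul_sq (Finset.range n) (fun _ => (1:ℝ)) (fun j => |v j|)
  simp only [one_mul, one_pow, mul_one, sq_abs, Finset.sum_const, Finset.card_range,
    nsmul_eq_mul] at h
  have h0 : 0 ≤ ∑ j ∈ Finset.range n, |v j| :=
    Finset.sum_nonneg fun j _ => abs_nonneg _
  calc ∑ j ∈ Finset.range n, |v j|
      = Real.sqrt ((∑ j ∈ Finset.range n, |v j|) ^ 2) := (Real.sqrt_sq h0).symm
    _ ≤ Real.sqrt ((n : ℝ) * ∑ j ∈ Finset.range n, (v j) ^ 2) := Real.sqrt_le_sqrt h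
    _ = Real.sqrt n * Real.sqrt (∑ j ∈ Finset.range n, (v j) ^ 2) :=
        Real.sqrt_mul (Nat.cast_nonneg n) _

/-- Discrete Cauchy–Schwarz in sqrt form. -/
lemma pp_cs_sqrt (s : Finset ℕ) (f g : ℕ → ℝ) (hf : ∀ i ∈ s, 0 ≤ f i) (hg : ∀ i ∈ s, 0 ≤ g i) :
    ∑ i ∈ s, Real.sqrt (f i) * Real.sqrt (g i)
      ≤ Real.sqrt (∑ i ∈ s, f i) * Real.sqrt (∑ i ∈ s, g i) := by
  have h := Finset.sum_mul_sq_le_sq_mul_sq s (fun i => Real.sqrt (f i)) (fun i => Real.sqrt (g i))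
  have hf' : ∑ i ∈ s, Real.sqrt (f i) ^ 2 = ∑ i ∈ s, f i :=
    Finset.sum_congr rfl fun i hi => Real.sq_sqrt (hf i hi)
  have hg' : ∑ i ∈ s, Real.sqrt (g i) ^ 2 = ∑ i ∈ s, g i :=
    Finset.sum_congr rfl fun i hi => Real.sq_sqrt (hg i hi)
  rw [hf', hg'] at h
  have h0 : 0 ≤ ∑ i ∈ s, Real.sqrt (f i) * Real.sqrt (g i) :=
    Finset.sum_nonneg fun i _ => mul_nonneg (Real.sqrt_nonneg _) (Real.sqrt_nonneg _)
  calc ∑ i ∈ s, Real.sqrt (f i) * Real.sqrt (g i)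
      = Real.sqrt ((∑ i ∈ s, Real.sqrt (f i) * Real.sqrt (g i)) ^ 2) := (Real.sqrt_sq h0).symm
    _ ≤ Real.sqrt ((∑ i ∈ s, f i) * ∑ i ∈ s, g i) := Real.sqrt_le_sqrt h
    _ = _ := Real.sqrt_mul (Finset.sum_nonneg hf) _

/-- Integral Cauchy–Schwarz: `∫_{(a,b)} |g| ≤ √(b-a) √(∫ g²)`. -/
lemma pp_int_cs {a b : ℝ} (hab : a ≤ b) {g : ℝ → ℝ}
    (h2 : MemLp g 2 (volume.restrict (Ioo a b))) (h1 : IntegrableOn g (Ioo a b)) :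
    ∫ t in Ioo a b, |g t| ≤ Real.sqrt (b - a) * Real.sqrt (∫ t in Ioo a b, (g t) ^ 2) := by
  set A := ∫ t in Ioo a b, (g t) ^ 2 with hA
  set b0 := ∫ t in Ioo a b, |g t| with hb0
  have hA0 : 0 ≤ A := setIntegral_nonneg measurableSet_Ioo fun t _ => sq_nonneg _
  have hb00 : 0 ≤ b0 := setIntegral_nonneg measurableSet_Ioo fun t _ => abs_nonneg _
  have hsq : Integrable (fun t => (g t) ^ 2) (volume.restrict (Ioo a b)) := h2.integrable_sq
  have key : ∀ s : ℝ, 0 < s → 2 * b0 ≤ s * A + (b - a) / s := by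
    intro s hs
    have hpt : ∀ t, |g t| ≤ (s * (g t) ^ 2 + 1 / s) / 2 := by
      intro t
      have h1' : 2 * s * |g t| ≤ s ^ 2 * (g t) ^ 2 + 1 := by
        nlinarith [sq_nonneg (s * |g t| - 1), sq_abs (g t)]
      rw [le_div_iff₀ (by norm_num : (0:ℝ) < 2), ← mul_le_mul_iff_of_pos_right hs]
      have he : (s * (g t) ^ 2 + 1 / s) * s = s ^ 2 * (g t) ^ 2 + 1 := by
        field_simp
      rw [he]; linarith
    have hint : Integrable (fun t => (s * (g t) ^ 2 + 1 / s) / 2)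
        (volume.restrict (Ioo a b)) := ((hsq.const_mul s).add (integrable_const _)).div_const 2
    have hmono := integral_mono h1.abs hint hpt
    have hconst : ∫ _ in Ioo a b, (1 / s : ℝ) = (b - a) * (1 / s) := by
      rw [setIntegral_const, Real.volume_real_Ioo_of_le (by linarith), smul_eq_mul]
    rw [integral_div, integral_add (hsq.const_mul s) (integrable_const _),
      integral_const_mul, hconst] at hmono
    have h2 : b0 ≤ (s * A + (b - a) * (1 / s)) / 2 := hmono
    have h3 : (b - a) * (1 / s) = (b - a) / s := by ring
    rw [h3] at h2; linarith
  have hsqle : b0 ^ 2 ≤ (b - a) * A := by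
    rcases le_or_gt b0 0 with h | h
    · have : b0 = 0 := le_antisymm h hb00
      rw [this]; simpa using mul_nonneg (sub_nonneg.2 hab) hA0
    · rcases eq_or_lt_of_le hA0 with h' | h'
      · -- A = 0
        exfalso
        have hpos : (0:ℝ) < b - a + 1 := by linarith
        have hkey := key ((b - a + 1) / (2 * b0)) (div_pos hpos (by linarith))
        rw [← h', mul_zero, zero_add, div_div_eq_mul_div, le_div_iff₀ hpos] at hkey
        nlinarith [hkey]
      · have hAp := key (b0 / A) (div_pos h h')
        have hAne : A ≠ 0 := ne_of_gt h'
        rw [div_mul_cancel₀ _ hAne] at hAp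
        have h2' : b0 ≤ (b - a) / (b0 / A) := by linarith
        rw [div_div_eq_mul_div, le_div_iff₀ h] at h2'
        calc b0 ^ 2 = b0 * b0 := pow_two b0
          _ ≤ (b - a) * A := h2'
  calc b0 = Real.sqrt (b0 ^ 2) := (Real.sqrt_sq hb00).symm
    _ ≤ Real.sqrt ((b - a) * A) := Real.sqrt_le_sqrt hsqle
    _ = Real.sqrt (b - a) * Real.sqrt A := Real.sqrt_mul (by linarith) _

/-- `|∫_a^t g| ≤ ∫_{(a,b)} |g|` for `a ≤ t ≤ b`. -/
lemma pp_primitive_bound {a b t : ℝ} (hat : a ≤ t) (htb : t ≤ b) {g : ℝ → ℝ}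
    (h1 : IntegrableOn g (Ioo a b)) :
    |∫ u in a..t, g u| ≤ ∫ u in Ioo a b, |g u| := by
  have habs : IntegrableOn (fun u => |g u|) (Ioc a b) := by
    rw [integrableOn_Ioc_iff_integrableOn_Ioo]
    exact h1.abs
  have h1' : IntegrableOn g (Ioc a t) := by
    have : IntegrableOn g (Ioc a b) := by rw [integrableOn_Ioc_iff_integrableOn_Ioo]; exact h1
    exact this.mono_set (Ioc_subset_Ioc le_rfl htb)
  rw [intervalIntegral.integral_of_le hat]
  calc |∫ u in Ioc a t, g u| ≤ ∫ u in Ioc a t, |g u| := by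
        simpa using norm_integral_le_integral_norm (μ := volume.restrict (Ioc a t)) g
    _ ≤ ∫ u in Ioc a b, |g u| :=
        setIntegral_mono_set habs (ae_of_all _ fun u => abs_nonneg _)
          (HasSubset.Subset.eventuallyLE (Ioc_subset_Ioc le_rfl htb))
    _ = ∫ u in Ioo a b, |g u| := integral_Ioc_eq_integral_Ioo

set_option maxHeartbeats 1600000 in
/-- piecewise Poincaré inequality
`‖τ‖_{L²(0,1)} ≤ C (‖D_𝒯 τ‖_{L²(0,1)} + N^{1/2} |[τ]|)` for piecewise `H¹` functions
`τ` on a quasi-uniform partition of `(0,1)` into `N` intervals. A piecewise `H¹`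
function is encoded by its elementwise `L²` derivative `g i` and values
`τ i t = a i + ∫_{x i}^t g i`. -/
theorem piecewise_poincare (cq : ℝ) (hcq : 1 ≤ cq) :
    ∃ C : ℝ, 0 < C ∧
      ∀ (N : ℕ), 0 < N → ∀ x : ℕ → ℝ, x 0 = 0 → x N = 1 →
      (∀ i < N, 1 / (cq * N) ≤ x (i + 1) - x i ∧ x (i + 1) - x i ≤ cq / N) →
      ∀ (g : ℕ → ℝ → ℝ) (a : ℕ → ℝ),
      (∀ i < N, MemLp (g i) 2 (volume.restrict (Ioo (x i) (x (i + 1))))) →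
      (∀ i < N, IntegrableOn (g i) (Ioo (x i) (x (i + 1)))) →
      ∀ τ : ℕ → ℝ → ℝ, (∀ i < N, ∀ t, τ i t = a i + ∫ u in (x i)..t, g i u) →
      Real.sqrt (∑ i ∈ Finset.range N, ∫ t in Ioo (x i) (x (i + 1)), (τ i t) ^ 2)
        ≤ C * (Real.sqrt (∑ i ∈ Finset.range N, ∫ t in Ioo (x i) (x (i + 1)), (g i t) ^ 2)
            + Real.sqrt N * Real.sqrt (∑ j ∈ Finset.range (N + 1),
                ((if j < N then τ j (x j) else 0)
                  - (if j = 0 then 0 else τ (j - 1) (x j))) ^ 2)) := by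
  refine ⟨4 * cq, by linarith, ?_⟩
  intro N hN x hx0 hxN hquasi g a hg2 hg1 τ hτ
  have hNR : (1:ℝ) ≤ (N:ℝ) := by exact_mod_cast hN
  have hcq0 : (0:ℝ) < cq := by linarith
  have hlen_pos : ∀ i < N, 0 < x (i + 1) - x i := by
    intro i hi
    exact lt_of_lt_of_le (div_pos one_pos (mul_pos hcq0 (by exact_mod_cast hN))) (hquasi i hi).1
  have hle : ∀ i < N, x i ≤ x (i + 1) := fun i hi => by linarith [hlen_pos i hi]
  set S := ∑ i ∈ Finset.range N, ∫ t in Ioo (x i) (x (i + 1)), (τ i t) ^ 2 with hSdef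
  set Bv := ∑ i ∈ Finset.range N, ∫ t in Ioo (x i) (x (i + 1)), (g i t) ^ 2 with hBdef
  set Qv := ∑ j ∈ Finset.range (N + 1),
      ((if j < N then τ j (x j) else 0) - (if j = 0 then 0 else τ (j - 1) (x j))) ^ 2 with hQdef
  set J : ℕ → ℝ := fun j =>
      (if j < N then τ j (x j) else 0) - (if j = 0 then 0 else τ (j - 1) (x j)) with hJf
  set G : ℕ → ℝ := fun k => ∫ u in (x k)..(x (k + 1)), g k u with hGf
  have hQJ : ∑ j ∈ Finset.range (N + 1), (J j) ^ 2 = Qv := by simp only [hQdef, hJf]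
  clear_value S Bv Qv J G
  have hA0 : ∀ i, 0 ≤ ∫ t in Ioo (x i) (x (i + 1)), (g i t) ^ 2 := fun i =>
    setIntegral_nonneg measurableSet_Ioo fun t _ => sq_nonneg _
  have hQ0 : 0 ≤ Qv := by
    rw [hQdef]; exact Finset.sum_nonneg fun j _ => sq_nonneg _
  have hB0 : 0 ≤ Bv := by
    rw [hBdef]; exact Finset.sum_nonneg fun i _ => hA0 i
  have hS0 : 0 ≤ S := by
    rw [hSdef]
    exact Finset.sum_nonneg fun i _ =>
      setIntegral_nonneg measurableSet_Ioo fun t _ => sq_nonneg _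
  -- value formula for a i
  have hval : ∀ i, i < N →
      a i = (∑ j ∈ Finset.range (i + 1), J j) + ∑ k ∈ Finset.range i, G k := by
    intro i
    induction i with
    | zero =>
      intro _
      have h0 : J 0 = a 0 := by
        simp [hJf, hN, hτ 0 hN, intervalIntegral.integral_same]
      rw [Finset.sum_range_one, Finset.sum_range_zero, add_zero, h0]
    | succ n ih =>
      intro hn
      have hnN : n < N := by omega
      have hih := ih hnN
      have hJn : J (n + 1) = a (n + 1) - (a n + G n) := by
        simp only [hJf, if_pos hn, if_neg (Nat.succ_ne_zero n), Nat.add_sub_cancel]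
        rw [hτ (n + 1) hn, intervalIntegral.integral_same, add_zero, hτ n hnN, hGf]
      rw [Finset.sum_range_succ (f := J), Finset.sum_range_succ (f := G)]
      have : ∑ j ∈ Finset.range (n + 1), J j + ∑ k ∈ Finset.range n, G k = a n := hih.symm
      linarith [hJn, this]
  -- bound on |a i|
  have hsum_h : ∑ i ∈ Finset.range N, (x (i + 1) - x i) = 1 := by
    rw [Finset.sum_range_sub (f := x), hxN, hx0, sub_zero]
  have habs : ∀ i, i < N →
      |a i| ≤ Real.sqrt ((N:ℝ) + 1) * Real.sqrt Qv + Real.sqrt Bv := by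
    intro i hi
    rw [hval i hi]
    have h1 : |∑ j ∈ Finset.range (i + 1), J j + ∑ k ∈ Finset.range i, G k|
        ≤ (∑ j ∈ Finset.range (i + 1), |J j|) + ∑ k ∈ Finset.range i, |G k| :=
      (abs_add_le _ _).trans (add_le_add (Finset.abs_sum_le_sum_abs _ _)
        (Finset.abs_sum_le_sum_abs _ _))
    have h2 : (∑ j ∈ Finset.range (i + 1), |J j|) ≤ ∑ j ∈ Finset.range (N + 1), |J j| :=
      Finset.sum_le_sum_of_subset_of_nonneg (Finset.range_subset_range.2 (by omega))
        fun j _ _ => abs_nonneg _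
    have h3 : (∑ k ∈ Finset.range i, |G k|) ≤ ∑ k ∈ Finset.range N, |G k| :=
      Finset.sum_le_sum_of_subset_of_nonneg (Finset.range_subset_range.2 (by omega))
        fun k _ _ => abs_nonneg _
    have h4 : (∑ j ∈ Finset.range (N + 1), |J j|)
        ≤ Real.sqrt ((N:ℝ) + 1) * Real.sqrt Qv := by
      have := pp_cs_fin (N + 1) J
      have hcast : ((N + 1 : ℕ) : ℝ) = (N:ℝ) + 1 := by push_cast; ring
      rw [hcast, hQJ] at this
      exact this
    have h5 : (∑ k ∈ Finset.range N, |G k|) ≤ Real.sqrt Bv := by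
      have hG1 : ∀ k ∈ Finset.range N, |G k| ≤
          Real.sqrt (x (k + 1) - x k) *
            Real.sqrt (∫ t in Ioo (x k) (x (k + 1)), (g k t) ^ 2) := by
        intro k hk
        have hkN : k < N := Finset.mem_range.1 hk
        calc |G k| ≤ ∫ u in Ioo (x k) (x (k + 1)), |g k u| := by
              rw [hGf]
              exact pp_primitive_bound (hle k hkN) le_rfl (hg1 k hkN)
          _ ≤ _ := pp_int_cs (hle k hkN) (hg2 k hkN) (hg1 k hkN)
      calc (∑ k ∈ Finset.range N, |G k|)
          ≤ ∑ k ∈ Finset.range N, Real.sqrt (x (k + 1) - x k) *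
              Real.sqrt (∫ t in Ioo (x k) (x (k + 1)), (g k t) ^ 2) :=
            Finset.sum_le_sum hG1
        _ ≤ Real.sqrt (∑ k ∈ Finset.range N, (x (k + 1) - x k)) *
              Real.sqrt (∑ k ∈ Finset.range N, ∫ t in Ioo (x k) (x (k + 1)), (g k t) ^ 2) :=
            pp_cs_sqrt _ _ _ (fun k hk => (hlen_pos k (Finset.mem_range.1 hk)).le)
              (fun k _ => hA0 k)
        _ = Real.sqrt Bv := by rw [hsum_h, Real.sqrt_one, one_mul, ← hBdef]
    linarith
  -- square bound on a i
  have hasq : ∀ i, i < N → (a i) ^ 2 ≤ 2 * ((N:ℝ) + 1) * Qv + 2 * Bv := by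
    intro i hi
    have h := habs i hi
    have e1 : (Real.sqrt ((N:ℝ) + 1) * Real.sqrt Qv) ^ 2 = ((N:ℝ) + 1) * Qv := by
      rw [mul_pow, Real.sq_sqrt (by positivity), Real.sq_sqrt hQ0]
    have e2 : (Real.sqrt Bv) ^ 2 = Bv := Real.sq_sqrt hB0
    nlinarith [sq_abs (a i), abs_nonneg (a i),
      sq_nonneg (Real.sqrt ((N:ℝ) + 1) * Real.sqrt Qv - Real.sqrt Bv),
      Real.sqrt_nonneg ((N:ℝ) + 1), Real.sqrt_nonneg Qv, Real.sqrt_nonneg Bv,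
      mul_nonneg (Real.sqrt_nonneg ((N:ℝ) + 1)) (Real.sqrt_nonneg Qv)]
  -- elementwise L² bound
  have key1 : ∀ i, i < N →
      (∫ t in Ioo (x i) (x (i + 1)), (τ i t) ^ 2)
        ≤ 2 * (x (i + 1) - x i) * (a i) ^ 2
          + 2 * (x (i + 1) - x i) ^ 2 * ∫ t in Ioo (x i) (x (i + 1)), (g i t) ^ 2 := by
    intro i hi
    have hab := hle i hi
    set Ai := ∫ t in Ioo (x i) (x (i + 1)), (g i t) ^ 2 with hAi
    set M := |a i| + Real.sqrt (x (i + 1) - x i) * Real.sqrt Ai with hM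
    have hM0 : 0 ≤ M :=
      add_nonneg (abs_nonneg _) (mul_nonneg (Real.sqrt_nonneg _) (Real.sqrt_nonneg _))
    have hpt : ∀ t ∈ Ioo (x i) (x (i + 1)), (τ i t) ^ 2 ≤ M ^ 2 := by
      intro t ht
      have h1 : |τ i t| ≤ M := by
        rw [hτ i hi t]
        calc |a i + ∫ u in (x i)..t, g i u|
            ≤ |a i| + |∫ u in (x i)..t, g i u| := abs_add_le _ _
          _ ≤ |a i| + ∫ u in Ioo (x i) (x (i + 1)), |g i u| := by
              have := pp_primitive_bound ht.1.le ht.2.le (hg1 i hi)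
              linarith
          _ ≤ M := by
              have := pp_int_cs hab (hg2 i hi) (hg1 i hi)
              rw [hM]; linarith
      calc (τ i t) ^ 2 = |τ i t| ^ 2 := (sq_abs _).symm
        _ ≤ M ^ 2 := pow_le_pow_left₀ (abs_nonneg _) h1 2
    have hint : (∫ t in Ioo (x i) (x (i + 1)), (τ i t) ^ 2)
        ≤ (x (i + 1) - x i) * M ^ 2 := by
      have hconst : (∫ _ in Ioo (x i) (x (i + 1)), M ^ 2)
          = (x (i + 1) - x i) * M ^ 2 := by
        rw [setIntegral_const, Real.volume_real_Ioo_of_le (by linarith),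
          smul_eq_mul]
      rw [← hconst]
      refine integral_mono_of_nonneg (ae_of_all _ fun t => sq_nonneg _)
        (integrableOn_const measure_Ioo_lt_top.ne) ?_
      exact (ae_restrict_iff' measurableSet_Ioo).2 (ae_of_all _ hpt)
    have hAi0 : 0 ≤ Ai := hA0 i
    have e1 : (Real.sqrt (x (i + 1) - x i) * Real.sqrt Ai) ^ 2 = (x (i + 1) - x i) * Ai := by
      rw [mul_pow, Real.sq_sqrt (by linarith), Real.sq_sqrt hAi0]
    have hM2 : M ^ 2 ≤ 2 * (a i) ^ 2 + 2 * (x (i + 1) - x i) * Ai := by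
      nlinarith [sq_nonneg (|a i| - Real.sqrt (x (i + 1) - x i) * Real.sqrt Ai),
        sq_abs (a i), abs_nonneg (a i),
        mul_nonneg (Real.sqrt_nonneg (x (i + 1) - x i)) (Real.sqrt_nonneg Ai)]
    calc (∫ t in Ioo (x i) (x (i + 1)), (τ i t) ^ 2)
        ≤ (x (i + 1) - x i) * M ^ 2 := hint
      _ ≤ (x (i + 1) - x i) * (2 * (a i) ^ 2 + 2 * (x (i + 1) - x i) * Ai) :=
          mul_le_mul_of_nonneg_left hM2 (by linarith)
      _ = 2 * (x (i + 1) - x i) * (a i) ^ 2 + 2 * (x (i + 1) - x i) ^ 2 * Ai := by ring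
  -- sum it up
  set K := 2 * ((N:ℝ) + 1) * Qv + 2 * Bv with hK
  have hK0 : 0 ≤ K := by rw [hK]; positivity
  clear_value K
  have hstep : ∀ i ∈ Finset.range N,
      (∫ t in Ioo (x i) (x (i + 1)), (τ i t) ^ 2)
        ≤ 2 * (cq / N) * K + 2 * (cq / N) ^ 2 * ∫ t in Ioo (x i) (x (i + 1)), (g i t) ^ 2 := by
    intro i hi'
    have hi : i < N := Finset.mem_range.1 hi'
    have hhi := (hquasi i hi).2
    have hpos := hlen_pos i hi
    have ha2 := hasq i hi
    have hAi0 := hA0 i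
    have t1 : 2 * (x (i + 1) - x i) * (a i) ^ 2 ≤ 2 * (cq / N) * K := by
      calc 2 * (x (i + 1) - x i) * (a i) ^ 2
          ≤ 2 * (x (i + 1) - x i) * K :=
            mul_le_mul_of_nonneg_left ha2 (by linarith)
        _ ≤ 2 * (cq / N) * K := mul_le_mul_of_nonneg_right (by linarith) hK0
    have t2 : 2 * (x (i + 1) - x i) ^ 2 * (∫ t in Ioo (x i) (x (i + 1)), (g i t) ^ 2)
        ≤ 2 * (cq / N) ^ 2 * ∫ t in Ioo (x i) (x (i + 1)), (g i t) ^ 2 := by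
      have hsq2 : (x (i + 1) - x i) ^ 2 ≤ (cq / N) ^ 2 :=
        pow_le_pow_left₀ (by linarith) hhi 2
      exact mul_le_mul_of_nonneg_right (by linarith) hAi0
    linarith [key1 i hi]
  have hSsum : S ≤ (N:ℝ) * (2 * (cq / N) * K) + 2 * (cq / N) ^ 2 * Bv := by
    calc S = ∑ i ∈ Finset.range N, ∫ t in Ioo (x i) (x (i + 1)), (τ i t) ^ 2 := hSdef
      _ ≤ ∑ i ∈ Finset.range N, (2 * (cq / N) * K
          + 2 * (cq / N) ^ 2 * ∫ t in Ioo (x i) (x (i + 1)), (g i t) ^ 2) :=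
        Finset.sum_le_sum hstep
      _ = (N:ℝ) * (2 * (cq / N) * K) + 2 * (cq / N) ^ 2 * Bv := by
        rw [Finset.sum_add_distrib, Finset.sum_const, Finset.card_range, ← Finset.mul_sum,
          ← hBdef]
        simp [nsmul_eq_mul]
  clear hJf hGf hQJ hA0 hval hsum_h habs hasq key1 hstep hτ hg1 hg2 hquasi hle hlen_pos
  clear hSdef hBdef hQdef hx0 hxN J G τ a g x
  have hNne : (N:ℝ) ≠ 0 := by positivity
  have hcqN : cq / N ≤ cq := by
    rw [div_le_iff₀ (by positivity)]
    nlinarith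
  have hcqN0 : 0 < cq / N := by positivity
  have hSbound : S ≤ 16 * cq ^ 2 * (Bv + (N:ℝ) * Qv) := by
    have e1 : (N:ℝ) * (2 * (cq / N) * K) = 2 * cq * K := by
      field_simp
    rw [e1] at hSsum
    have h6 : 2 * (cq / N) ^ 2 * Bv ≤ 2 * cq ^ 2 * Bv := by
      have hsq3 : (cq / N) ^ 2 ≤ cq ^ 2 := pow_le_pow_left₀ hcqN0.le hcqN 2
      exact mul_le_mul_of_nonneg_right (by linarith) hB0
    have hQN : 0 ≤ (N:ℝ) * Qv := mul_nonneg (Nat.cast_nonneg N) hQ0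
    have hcq2 : cq ≤ cq ^ 2 := by
      have := le_mul_of_one_le_left hcq0.le hcq
      calc cq ≤ cq * cq := this
        _ = cq ^ 2 := (pow_two cq).symm
    have h7 : 2 * cq * K ≤ 8 * cq ^ 2 * ((N:ℝ) * Qv) + 4 * cq ^ 2 * Bv := by
      rw [hK]
      have s1 : ((N:ℝ) + 1) * Qv ≤ 2 * ((N:ℝ) * Qv) := by
        nlinarith [mul_nonneg hQ0 (by linarith : (0:ℝ) ≤ (N:ℝ) - 1)]
      have s2 : 4 * cq * (((N:ℝ) + 1) * Qv) ≤ 4 * cq * (2 * ((N:ℝ) * Qv)) :=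
        mul_le_mul_of_nonneg_left s1 (by linarith)
      have s3 : 8 * (cq * ((N:ℝ) * Qv)) ≤ 8 * (cq ^ 2 * ((N:ℝ) * Qv)) := by
        have := mul_le_mul_of_nonneg_right hcq2 hQN
        linarith
      have s4 : 4 * (cq * Bv) ≤ 4 * (cq ^ 2 * Bv) := by
        have := mul_le_mul_of_nonneg_right hcq2 hB0
        linarith
      nlinarith [s2, s3, s4]
    nlinarith [h6, h7, hSsum, mul_nonneg hB0 (sq_nonneg cq), mul_nonneg hQN (sq_nonneg cq)]
  -- conclude
  have h1 : Real.sqrt S ≤ Real.sqrt (16 * cq ^ 2 * (Bv + (N:ℝ) * Qv)) :=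
    Real.sqrt_le_sqrt hSbound
  have hBNQ : 0 ≤ Bv + (N:ℝ) * Qv := by positivity
  have e : Real.sqrt (16 * cq ^ 2 * (Bv + (N:ℝ) * Qv))
      = 4 * cq * Real.sqrt (Bv + (N:ℝ) * Qv) := by
    rw [show 16 * cq ^ 2 * (Bv + (N:ℝ) * Qv) = (4 * cq) ^ 2 * (Bv + (N:ℝ) * Qv) by ring,
      Real.sqrt_mul (by positivity), Real.sqrt_sq (by linarith)]
  have h2 : Real.sqrt (Bv + (N:ℝ) * Qv) ≤ Real.sqrt Bv + Real.sqrt ((N:ℝ) * Qv) := by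
    have hNQ0 : 0 ≤ (N:ℝ) * Qv := by positivity
    have hsq : Bv + (N:ℝ) * Qv ≤ (Real.sqrt Bv + Real.sqrt ((N:ℝ) * Qv)) ^ 2 := by
      nlinarith [Real.sq_sqrt hB0, Real.sq_sqrt hNQ0, Real.sqrt_nonneg Bv,
        Real.sqrt_nonneg ((N:ℝ) * Qv)]
    calc Real.sqrt (Bv + (N:ℝ) * Qv)
        ≤ Real.sqrt ((Real.sqrt Bv + Real.sqrt ((N:ℝ) * Qv)) ^ 2) := Real.sqrt_le_sqrt hsq
      _ = _ := Real.sqrt_sq (by positivity)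
  rw [Real.sqrt_mul (Nat.cast_nonneg N)] at h2
  calc Real.sqrt S ≤ 4 * cq * Real.sqrt (Bv + (N:ℝ) * Qv) := by rw [← e]; exact h1
    _ ≤ 4 * cq * (Real.sqrt Bv + Real.sqrt (N:ℝ) * Real.sqrt Qv) :=
        mul_le_mul_of_nonneg_left h2 (by linarith)
end
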